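/- Let a monoid V act on an additive commutative monoid H and suppose the path identity holds. Then for every v : V, h : H, and every natural number m ≥ 1: m • (v • h) = v • (m • h) + (m - 1) • (v • 0). -/
import Mathlib


/-- Iterated form of the path identity:
`m • (v • h) = v • (m • h) + (m - 1) • (v • 0)` for `m ≥ 1`. -/
theorem path_identity_iterated {V H : Type*} [Monoid V] [AddCommMonoid H]
    [MulAction V H]
    (path : ∀ (v : V) (g h : H), v • g + v • h = v • (g + h) + v • (0 : H)) :
    ∀ (v : V) (h : H) (m : ℕ), 1 ≤ m →
      m • (v • h) = v • (m • h) + (m - 1) • (v • (0 : H)) := by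
  intro v h m hm
  induction m with
  | zero => omega
  | succ n ih =>
    rcases Nat.eq_or_lt_of_le hm with h1 | h1
    · simp [← h1]
    · have hn : 1 ≤ n := by omega
      rw [succ_nsmul, add_comm, ih hn, succ_nsmul, Nat.succ_sub_one,
        ← add_assoc, path, add_assoc, add_comm h (n • h)]
      congr 1
      have : n = 1 + (n - 1) := by omega
      rw [this, add_nsmul, one_nsmul]
      simp
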